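/- Let α, β > −1, let p be a positive integer, and let b > −p be such that β − b and b + p − 1 − β are both nonnegative integers. Then for each n ∈ ℕ there exist real coefficients c_m for max(0, n−p) ≤ m ≤ n+p such that for every x ∈ (−1,1], ∫_{−1}^{x} Q_n^{(α,β,b,p)}(t) dt = Σ_{m=max(0,n−p)}^{n+p} c_m Q_m^{(α,β,b,p)}(x); that is, the matrix representing the integration operator in the JFP basis has bandwidths (p, p). -/

import Mathlib

open MeasureTheory

noncomputable def Ccoef (α β : ℝ) (k n : ℕ) : ℝ :=
  if k ≤ n then
    (-1 : ℝ) ^ (n - k) * (ascPochhammer ℝ (n - k)).eval ((k : ℝ) + β + 1)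
      * (ascPochhammer ℝ k).eval ((n : ℝ) + α + β + 1)
      / (2 ^ k * (Nat.factorial (n - k)) * (Nat.factorial k))
  else 0

noncomputable def jacobiP (α β : ℝ) (n : ℕ) (x : ℝ) : ℝ :=
  ∑ k ∈ Finset.range (n + 1), Ccoef α β k n * (1 + x) ^ k

noncomputable def jfpQ (α β b p : ℝ) (n : ℕ) (x : ℝ) : ℝ :=
  (2 * ((1 + x) / 2) ^ (1 / p)) ^ b * jacobiP α β n (2 * ((1 + x) / 2) ^ (1 / p) - 1)

noncomputable abbrev pe (m : ℕ) (x : ℝ) : ℝ := (ascPochhammer ℝ m).eval x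

lemma pe_succ_right (m : ℕ) (x : ℝ) : pe (m+1) x = pe m x * (x + m) := by
  simp [pe, ascPochhammer_succ_right]

lemma pe_succ_left (m : ℕ) (x : ℝ) : pe (m+1) x = x * pe m (x+1) := by
  simp [pe, ascPochhammer_succ_left, Polynomial.eval_comp]

lemma pe_shift (m : ℕ) (x : ℝ) : x * pe m (x+1) = (x + m) * pe m x := by
  rw [← pe_succ_left, pe_succ_right]; ring

lemma cc_gt (α β : ℝ) {k n : ℕ} (h : n < k) : Ccoef α β k n = 0 := by
  simp [Ccoef, Nat.not_le.2 h]

lemma cc_le (α β : ℝ) {k n : ℕ} (h : k ≤ n) : Ccoef α β k n =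
    (-1 : ℝ) ^ (n - k) * pe (n - k) ((k : ℝ) + β + 1) * pe k ((n : ℝ) + α + β + 1)
      / (2 ^ k * (Nat.factorial (n - k)) * (Nat.factorial k)) := by
  simp [Ccoef, h, pe]

lemma cc_diag (α β : ℝ) (n : ℕ) :
    Ccoef α β n n = pe n ((n : ℝ) + α + β + 1) / (2 ^ n * (Nat.factorial n)) := by
  rw [cc_le α β le_rfl]; simp [pe]


-- I4 scalar
lemma cc_I4 (α γ : ℝ) (k n : ℕ) :
    ((k:ℝ)+γ) * Ccoef α γ k n = ((n:ℝ)+γ) * Ccoef (α+1) (γ-1) k n := by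
  rcases le_or_gt k n with h | h
  · rw [cc_le _ _ h, cc_le _ _ h]
    have hc : ((n - k : ℕ) : ℝ) = (n : ℝ) - k := by
      push_cast [Nat.cast_sub h]; ring
    have h1 : ((k:ℝ)+γ) * pe (n-k) (((k:ℝ)+γ) + 1) = (((k:ℝ)+γ) + (n-k:ℕ)) * pe (n-k) ((k:ℝ)+γ) := pe_shift _ _
    rw [hc] at h1
    have e2 : (k:ℝ) + (γ-1) + 1 = (k:ℝ) + γ := by ring
    have e3 : (n:ℝ) + (α+1) + (γ-1) + 1 = (n:ℝ) + α + γ + 1 := by ring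
    rw [e2, e3]
    have hD : ((2:ℝ) ^ k * (Nat.factorial (n-k)) * (Nat.factorial k)) ≠ 0 := by
      positivity
    field_simp
    linear_combination (pe k ((n:ℝ)+α+γ+1)) * h1
  · rw [cc_gt _ _ h, cc_gt _ _ h]; ring

lemma cc_I1 (α β : ℝ) (n k : ℕ) (hn : 1 ≤ n) (h0 : (n:ℝ)+α+β+1 ≠ 0) :
    (2*(n:ℝ)+α+β+1) * Ccoef α β k n
      = ((n:ℝ)+α+β+1) * Ccoef α (β+1) k n + ((n:ℝ)+α) * Ccoef α (β+1) k (n-1) := by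
  rcases lt_trichotomy k n with hk | rfl | hk
  · obtain ⟨d, rfl⟩ : ∃ d, n = k + d + 1 := ⟨n - k - 1, by omega⟩
    rw [cc_le _ _ (by omega : k ≤ k+d+1), cc_le _ _ (by omega : k ≤ k+d+1),
        cc_le _ _ (by omega : k ≤ k+d+1-1)]
    simp only [show k+d+1-k = d+1 from by omega, show k+d+1-1 = k+d from by omega,
      show k+d-k = d from by omega]
    push_cast [Nat.factorial_succ] at h0 ⊢
    rw [pe_succ_left d ((k:ℝ)+β+1),
        show (k:ℝ)+β+1+1 = (k:ℝ)+(β+1)+1 from by ring,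
        pe_succ_right d ((k:ℝ)+(β+1)+1)]
    have hB2 : pe k ((k:ℝ)+↑d+1+α+(β+1)+1)
        = (((k:ℝ)+↑d+1+α+β+1) + k) * pe k ((k:ℝ)+↑d+1+α+β+1) / ((k:ℝ)+↑d+1+α+β+1) := by
      have h := pe_shift k ((k:ℝ)+↑d+1+α+β+1)
      rw [show (k:ℝ)+↑d+1+α+β+1+1 = (k:ℝ)+↑d+1+α+(β+1)+1 from by ring] at h
      rw [eq_div_iff h0]
      linear_combination h
    rw [hB2, pow_succ]
    field_simp
    ring
  · rw [cc_diag, cc_diag, cc_gt _ _ (by omega : k - 1 < k)]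
    have h := pe_shift k ((k:ℝ)+α+β+1)
    rw [show (k:ℝ)+α+β+1+1 = (k:ℝ)+α+(β+1)+1 from by ring] at h
    field_simp
    linear_combination (-(1:ℝ)) * h
  · rw [cc_gt _ _ hk, cc_gt _ _ hk, cc_gt _ _ (by omega : n - 1 < k)]; ring

lemma cc_I3 (α β : ℝ) (n k : ℕ) (hn : 1 ≤ n) (h0 : (n:ℝ)+α+β+1 ≠ 0) :
    (2*(n:ℝ)+α+β+1) * Ccoef α β k n
      = ((n:ℝ)+α+β+1) * Ccoef (α+1) β k n - ((n:ℝ)+β) * Ccoef (α+1) β k (n-1) := by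
  rcases lt_trichotomy k n with hk | rfl | hk
  · obtain ⟨d, rfl⟩ : ∃ d, n = k + d + 1 := ⟨n - k - 1, by omega⟩
    rw [cc_le _ _ (by omega : k ≤ k+d+1), cc_le _ _ (by omega : k ≤ k+d+1),
        cc_le _ _ (by omega : k ≤ k+d+1-1)]
    simp only [show k+d+1-k = d+1 from by omega, show k+d+1-1 = k+d from by omega,
      show k+d-k = d from by omega]
    push_cast [Nat.factorial_succ] at h0 ⊢
    rw [pe_succ_right d ((k:ℝ)+β+1)]
    have hB2 : pe k ((k:ℝ)+↑d+1+(α+1)+β+1)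
        = (((k:ℝ)+↑d+1+α+β+1) + k) * pe k ((k:ℝ)+↑d+1+α+β+1) / ((k:ℝ)+↑d+1+α+β+1) := by
      have h := pe_shift k ((k:ℝ)+↑d+1+α+β+1)
      rw [show (k:ℝ)+↑d+1+α+β+1+1 = (k:ℝ)+↑d+1+(α+1)+β+1 from by ring] at h
      rw [eq_div_iff h0]
      linear_combination h
    rw [hB2, pow_succ]
    have hB1 : pe k ((k:ℝ)+↑d+(α+1)+β+1) = pe k ((k:ℝ)+↑d+1+α+β+1) := by
      rw [show (k:ℝ)+↑d+(α+1)+β+1 = (k:ℝ)+↑d+1+α+β+1 from by ring]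
    rw [hB1]
    field_simp
    ring
  · rw [cc_diag, cc_diag, cc_gt _ _ (by omega : k - 1 < k)]
    have h := pe_shift k ((k:ℝ)+α+β+1)
    rw [show (k:ℝ)+α+β+1+1 = (k:ℝ)+(α+1)+β+1 from by ring] at h
    field_simp
    linear_combination (-(1:ℝ)) * h
  · rw [cc_gt _ _ hk, cc_gt _ _ hk, cc_gt _ _ (by omega : n - 1 < k)]; ring

lemma cc_I20 (α β : ℝ) (n : ℕ) :
    ((n:ℝ)+β+1) * Ccoef α β 0 n + ((n:ℝ)+1) * Ccoef α β 0 (n+1) = 0 := by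
  rw [cc_le _ _ (Nat.zero_le n), cc_le _ _ (Nat.zero_le (n+1))]
  simp only [Nat.sub_zero]
  push_cast [Nat.factorial_succ] at *
  rw [pe_succ_right n ((0:ℝ)+β+1)]
  simp only [pe, ascPochhammer_zero, Polynomial.eval_one]
  field_simp
  ring

set_option maxHeartbeats 1600000 in
lemma cc_I2 (α β : ℝ) (n j : ℕ) (hj : 1 ≤ j) :
    (2*(n:ℝ)+α+β+2) * Ccoef α (β+1) (j-1) n
      = 2*(((n:ℝ)+β+1) * Ccoef α β j n + ((n:ℝ)+1) * Ccoef α β j (n+1)) := by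
  obtain ⟨e, rfl⟩ : ∃ e, j = e + 1 := ⟨j - 1, by omega⟩
  simp only [Nat.add_sub_cancel]
  rcases lt_trichotomy (e+1) (n+1) with hk | hk | hk
  · -- e + 1 ≤ n : n = e + 1 + d
    obtain ⟨d, rfl⟩ : ∃ d, n = e + 1 + d := ⟨n - e - 1, by omega⟩
    rw [cc_le _ _ (by omega : e ≤ e+1+d), cc_le _ _ (by omega : e+1 ≤ e+1+d),
        cc_le _ _ (by omega : e+1 ≤ e+1+d+1)]
    simp only [show e+1+d-e = d+1 from by omega, show e+1+d-(e+1) = d from by omega,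
      show e+1+d+1-(e+1) = d+1 from by omega]
    push_cast [Nat.factorial_succ] at *
    rw [show ((e:ℝ)+1)+β+1 = (e:ℝ)+(β+1)+1 from by ring,
        pe_succ_right d ((e:ℝ)+(β+1)+1),
        pe_succ_left e ((e:ℝ)+1+↑d+α+β+1),
        pe_succ_right e ((e:ℝ)+1+↑d+1+α+β+1),
        show (e:ℝ)+1+↑d+α+β+1+1 = (e:ℝ)+↑d+1+α+(β+1)+1 from by ring,
        show (e:ℝ)+1+↑d+1+α+β+1 = (e:ℝ)+↑d+1+α+(β+1)+1 from by ring,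
        show (e:ℝ)+1+↑d+α+(β+1)+1 = (e:ℝ)+↑d+1+α+(β+1)+1 from by ring]
    rw [pow_succ]
    field_simp
    ring
  · -- j = n+1, i.e. n = e
    obtain rfl : n = e := by omega
    rw [cc_diag, cc_gt _ _ (by omega : n < n + 1), cc_diag]
    push_cast [Nat.factorial_succ] at *
    rw [pe_succ_right n ((n:ℝ)+1+α+β+1)]
    rw [show (n:ℝ)+1+α+β+1 = (n:ℝ)+α+(β+1)+1 from by ring]
    rw [pow_succ]
    field_simp
    ring
  · rw [cc_gt _ _ (by omega : n < e), cc_gt _ _ (by omega : n < e+1),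
        cc_gt _ _ (by omega : n+1 < e+1)]; ring

open Polynomial in
noncomputable def Jp (α β : ℝ) (n : ℕ) : Polynomial ℝ :=
  ∑ k ∈ Finset.range (n+1), Polynomial.C (Ccoef α β k n * 2^k) * Polynomial.X ^ k

lemma Jp_coeff (α β : ℝ) (n k : ℕ) : (Jp α β n).coeff k = Ccoef α β k n * 2^k := by
  rw [Jp, Polynomial.finset_sum_coeff]
  simp only [Polynomial.coeff_C_mul, Polynomial.coeff_X_pow, mul_ite, mul_one, mul_zero]
  rcases le_or_gt k n with h | h
  · rw [Finset.sum_eq_single k]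
    · simp
    · intro j _ hj; simp [Ne.symm hj]
    · intro hk; exact absurd (Finset.mem_range.2 (by omega)) hk
  · rw [Finset.sum_eq_zero, cc_gt _ _ h, zero_mul]
    intro j hj
    rw [if_neg]
    intro he; rw [Finset.mem_range] at hj; omega

lemma Jp_eval (α β : ℝ) (n : ℕ) (z : ℝ) :
    jacobiP α β n (2*z - 1) = (Jp α β n).eval z := by
  rw [jacobiP, Jp, Polynomial.eval_finset_sum]
  refine Finset.sum_congr rfl fun k _ => ?_
  simp [mul_pow, mul_comm, mul_assoc, mul_left_comm]

lemma Jp_zero (α β : ℝ) : Jp α β 0 = Polynomial.C 1 := by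
  rw [Jp]
  simp [Ccoef, pe]

lemma Jp_I1 (α β : ℝ) (n : ℕ) (hn : 1 ≤ n) (h0 : (n:ℝ)+α+β+1 ≠ 0) :
    (2*(n:ℝ)+α+β+1) • Jp α β n
      = ((n:ℝ)+α+β+1) • Jp α (β+1) n + ((n:ℝ)+α) • Jp α (β+1) (n-1) := by
  ext k
  simp only [Polynomial.coeff_smul, Polynomial.coeff_add, Jp_coeff, smul_eq_mul]
  linear_combination ((2:ℝ)^k) * cc_I1 α β n k hn h0

lemma Jp_I3 (α β : ℝ) (n : ℕ) (hn : 1 ≤ n) (h0 : (n:ℝ)+α+β+1 ≠ 0) :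
    (2*(n:ℝ)+α+β+1) • Jp α β n
      = ((n:ℝ)+α+β+1) • Jp (α+1) β n - ((n:ℝ)+β) • Jp (α+1) β (n-1) := by
  ext k
  simp only [Polynomial.coeff_smul, Polynomial.coeff_sub, Jp_coeff, smul_eq_mul]
  linear_combination ((2:ℝ)^k) * cc_I3 α β n k hn h0

lemma Jp_I2 (α β : ℝ) (n : ℕ) :
    (2*(n:ℝ)+α+β+2) • (Polynomial.X * Jp α (β+1) n)
      = ((n:ℝ)+β+1) • Jp α β n + ((n:ℝ)+1) • Jp α β (n+1) := by
  ext k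
  cases k with
  | zero =>
      simp only [Polynomial.coeff_smul, Polynomial.coeff_add, Jp_coeff, smul_eq_mul,
        Polynomial.mul_coeff_zero, Polynomial.coeff_X_zero, zero_mul, mul_zero]
      have := cc_I20 α β n
      linear_combination (-1:ℝ) * this
  | succ k =>
      simp only [Polynomial.coeff_smul, Polynomial.coeff_add, Jp_coeff, smul_eq_mul,
        Polynomial.coeff_X_mul]
      have h := cc_I2 α β n (k+1) (by omega)
      simp only [Nat.add_sub_cancel] at h
      push_cast at h
      linear_combination ((2:ℝ)^k) * h

lemma Jp_I4 (α γ : ℝ) (n : ℕ) :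
    Polynomial.X * Polynomial.derivative (Jp α γ n) + γ • Jp α γ n
      = ((n:ℝ)+γ) • Jp (α+1) (γ-1) n := by
  ext k
  cases k with
  | zero =>
      simp only [Polynomial.coeff_smul, Polynomial.coeff_add, Jp_coeff, smul_eq_mul,
        Polynomial.mul_coeff_zero, Polynomial.coeff_X_zero, zero_mul, zero_add]
      have := cc_I4 α γ 0 n
      push_cast at this
      linear_combination this
  | succ k =>
      simp only [Polynomial.coeff_smul, Polynomial.coeff_add, Jp_coeff, smul_eq_mul,
        Polynomial.coeff_X_mul, Polynomial.coeff_derivative]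
      have := cc_I4 α γ (k+1) n
      push_cast at this
      linear_combination ((2:ℝ)^(k+1)) * this

noncomputable def Sp (α β : ℝ) (a c : ℕ) : Submodule ℝ (Polynomial ℝ) :=
  Submodule.span ℝ (Jp α β '' (Set.Icc a c))

lemma mem_Sp (α β : ℝ) {a c m : ℕ} (h1 : a ≤ m) (h2 : m ≤ c) : Jp α β m ∈ Sp α β a c :=
  Submodule.subset_span ⟨m, ⟨h1, h2⟩, rfl⟩

lemma Sp_mono (α β : ℝ) {a c a' c' : ℕ} (h1 : a' ≤ a) (h2 : c ≤ c') :
    Sp α β a c ≤ Sp α β a' c' :=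
  Submodule.span_mono (Set.image_mono (Set.Icc_subset_Icc h1 h2))

lemma map_Sp_le {α β : ℝ} {a c : ℕ} (f : Polynomial ℝ →ₗ[ℝ] Polynomial ℝ)
    (T : Submodule ℝ (Polynomial ℝ)) (h : ∀ m, a ≤ m → m ≤ c → f (Jp α β m) ∈ T) :
    ∀ q ∈ Sp α β a c, f q ∈ T := by
  intro q hq
  have : Sp α β a c ≤ T.comap f := by
    rw [Sp, Submodule.span_le]
    rintro _ ⟨m, ⟨h1, h2⟩, rfl⟩
    exact h m h1 h2
  exact this hq

lemma Sp_le {α β α' β' : ℝ} {a c a' c' : ℕ}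
    (h : ∀ m, a ≤ m → m ≤ c → Jp α β m ∈ Sp α' β' a' c') :
    Sp α β a c ≤ Sp α' β' a' c' := by
  have := map_Sp_le (α := α) (β := β) (a := a) (c := c) LinearMap.id (Sp α' β' a' c')
    (by simpa using h)
  intro q hq; simpa using this q hq

-- raise β by one
lemma raise_beta (α β : ℝ) (hα : -1 < α) (hβ : -1 < β) (n : ℕ) :
    Jp α β n ∈ Sp α (β+1) (n-1) n := by
  rcases Nat.eq_zero_or_pos n with rfl | hn
  · rw [Jp_zero, ← Jp_zero α (β+1)]
    exact mem_Sp _ _ le_rfl le_rfl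
  · have hd : (2*(n:ℝ)+α+β+1) ≠ 0 := by
      have : (1:ℝ) ≤ (n:ℝ) := by exact_mod_cast hn
      nlinarith
    have h0 : ((n:ℝ)+α+β+1) ≠ 0 := by
      have : (1:ℝ) ≤ (n:ℝ) := by exact_mod_cast hn
      nlinarith
    have h := Jp_I1 α β n hn h0
    have hrep : Jp α β n = (2*(n:ℝ)+α+β+1)⁻¹ •
        (((n:ℝ)+α+β+1) • Jp α (β+1) n + ((n:ℝ)+α) • Jp α (β+1) (n-1)) := by
      rw [← h, smul_smul, inv_mul_cancel₀ hd, one_smul]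
    rw [hrep]
    exact Submodule.smul_mem _ _ (add_mem
      (Submodule.smul_mem _ _ (mem_Sp _ _ (by omega) le_rfl))
      (Submodule.smul_mem _ _ (mem_Sp _ _ le_rfl (by omega))))

-- raise α by one
lemma raise_alpha (α β : ℝ) (hα : -1 < α) (hβ : -1 < β) (n : ℕ) :
    Jp α β n ∈ Sp (α+1) β (n-1) n := by
  rcases Nat.eq_zero_or_pos n with rfl | hn
  · rw [Jp_zero, ← Jp_zero (α+1) β]
    exact mem_Sp _ _ le_rfl le_rfl
  · have h1 : (1:ℝ) ≤ (n:ℝ) := by exact_mod_cast hn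
    have hd : (2*(n:ℝ)+α+β+1) ≠ 0 := by nlinarith
    have h0 : ((n:ℝ)+α+β+1) ≠ 0 := by nlinarith
    have h := Jp_I3 α β n hn h0
    have hrep : Jp α β n = (2*(n:ℝ)+α+β+1)⁻¹ •
        (((n:ℝ)+α+β+1) • Jp (α+1) β n - ((n:ℝ)+β) • Jp (α+1) β (n-1)) := by
      rw [← h, smul_smul, inv_mul_cancel₀ hd, one_smul]
    rw [hrep]
    exact Submodule.smul_mem _ _ (sub_mem
      (Submodule.smul_mem _ _ (mem_Sp _ _ (by omega) le_rfl))
      (Submodule.smul_mem _ _ (mem_Sp _ _ le_rfl (by omega))))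

-- multiply by X, lowering β
lemma mulX_lower (α β : ℝ) (hα : -1 < α) (hβ : -1 < β) (n : ℕ) :
    Polynomial.X * Jp α (β+1) n ∈ Sp α β n (n+1) := by
  have hd : (2*(n:ℝ)+α+β+2) ≠ 0 := by
    have : (0:ℝ) ≤ (n:ℝ) := Nat.cast_nonneg n
    nlinarith
  have h := Jp_I2 α β n
  have hrep : Polynomial.X * Jp α (β+1) n = (2*(n:ℝ)+α+β+2)⁻¹ •
      (((n:ℝ)+β+1) • Jp α β n + ((n:ℝ)+1) • Jp α β (n+1)) := by
    rw [← h, smul_smul, inv_mul_cancel₀ hd, one_smul]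
  rw [hrep]
  exact Submodule.smul_mem _ _ (add_mem
    (Submodule.smul_mem _ _ (mem_Sp _ _ le_rfl (by omega)))
    (Submodule.smul_mem _ _ (mem_Sp _ _ (by omega) le_rfl)))


lemma mulX_Sp (α β : ℝ) (hα : -1 < α) (hβ : -1 < β) {a c : ℕ} {q : Polynomial ℝ}
    (hq : q ∈ Sp α (β+1) a c) : Polynomial.X * q ∈ Sp α β a (c+1) := by
  refine map_Sp_le (LinearMap.mulLeft ℝ (Polynomial.X : Polynomial ℝ)) _ ?_ q hq
  intro m h1 h2
  exact Sp_mono α β h1 (by omega) (mulX_lower α β hα hβ m)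

lemma raise_beta_iter (α β : ℝ) (hα : -1 < α) (hβ : -1 < β) (n : ℕ) (j : ℕ) :
    Jp α β n ∈ Sp α (β + j) (n - j) n := by
  induction j with
  | zero => simpa using mem_Sp α β le_rfl le_rfl
  | succ j ih =>
      have hβj : (-1:ℝ) < β + j := by
        have : (0:ℝ) ≤ (j:ℝ) := Nat.cast_nonneg j
        linarith
      have hstep : Sp α (β + j) (n - j) n ≤ Sp α (β + (j+1:ℕ)) (n - (j+1)) n := by
        refine Sp_le ?_
        intro m h1 h2
        have := raise_beta α (β + j) hα hβj m
        have hcast : (β + (j:ℝ)) + 1 = β + ((j+1:ℕ):ℝ) := by push_cast; ring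
        rw [hcast] at this
        exact Sp_mono _ _ (by omega) h2 this
      exact hstep ih

lemma raise_alpha_Sp (α β : ℝ) (hα : -1 < α) (hβ : -1 < β) {a c : ℕ} :
    Sp α β a c ≤ Sp (α+1) β (a-1) c := by
  refine Sp_le ?_
  intro m h1 h2
  exact Sp_mono _ _ (by omega) h2 (raise_alpha α β hα hβ m)

lemma mulXpow_lower (α β : ℝ) (hα : -1 < α) (hβ : -1 < β) (j : ℕ) :
    ∀ (a c : ℕ), ∀ q ∈ Sp α (β + j) a c, Polynomial.X ^ j * q ∈ Sp α β a (c + j) := by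
  induction j with
  | zero => intro a c q hq; simpa using hq
  | succ j ih =>
      intro a c q hq
      have hβj : (-1:ℝ) < β + j := by
        have : (0:ℝ) ≤ (j:ℝ) := Nat.cast_nonneg j
        linarith
      have h1 : Polynomial.X * q ∈ Sp α (β + j) a (c+1) := by
        apply mulX_Sp α (β + j) hα hβj
        have hcast : β + ((j+1:ℕ):ℝ) = (β + (j:ℝ)) + 1 := by push_cast; ring
        rwa [hcast] at hq
      have h2 := ih a (c+1) _ h1
      have : Polynomial.X ^ (j+1) * q = Polynomial.X ^ j * (Polynomial.X * q) := by ring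
      rw [this]
      exact Sp_mono _ _ le_rfl (by omega) h2

lemma mulX_same (α β : ℝ) (hα : -1 < α) (hβ : -1 < β) {a c : ℕ} {q : Polynomial ℝ}
    (hq : q ∈ Sp α β a c) : Polynomial.X * q ∈ Sp α β (a-1) (c+1) := by
  refine map_Sp_le (LinearMap.mulLeft ℝ (Polynomial.X : Polynomial ℝ)) _ ?_ q hq
  intro m h1 h2
  have hm : Jp α β m ∈ Sp α (β+1) (m-1) m := raise_beta α β hα hβ m
  have := mulX_Sp α β hα hβ hm
  exact Sp_mono _ _ (by omega) (by omega) this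

lemma mulXpow_same (α β : ℝ) (hα : -1 < α) (hβ : -1 < β) (j : ℕ) :
    ∀ (a c : ℕ), ∀ q ∈ Sp α β a c, Polynomial.X ^ j * q ∈ Sp α β (a - j) (c + j) := by
  induction j with
  | zero => intro a c q hq; simpa using hq
  | succ j ih =>
      intro a c q hq
      have h1 := mulX_same α β hα hβ hq
      have h2 := ih (a-1) (c+1) _ h1
      have : Polynomial.X ^ (j+1) * q = Polynomial.X ^ j * (Polynomial.X * q) := by ring
      rw [this]
      exact Sp_mono _ _ (by omega) (by omega) h2

lemma Sp_repr {α β : ℝ} {a c : ℕ} {q : Polynomial ℝ} (h : q ∈ Sp α β a c) :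
    ∃ f : ℕ → ℝ, q = ∑ m ∈ Finset.Icc a c, f m • Jp α β m := by
  rw [Sp, Finsupp.mem_span_image_iff_linearCombination] at h
  obtain ⟨l, hl, rfl⟩ := h
  refine ⟨l, ?_⟩
  rw [Finsupp.linearCombination_apply]
  refine Finsupp.sum_of_support_subset l ?_ _ (by simp)
  intro x hx
  have := hl hx
  simpa [Finset.mem_Icc] using this

noncomputable def Lop (γ : ℝ) : Polynomial ℝ →ₗ[ℝ] Polynomial ℝ :=
  (LinearMap.mulLeft ℝ (Polynomial.X : Polynomial ℝ)).comp Polynomial.derivative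
    + γ • LinearMap.id

lemma Lop_apply (γ : ℝ) (q : Polynomial ℝ) :
    Lop γ q = Polynomial.X * Polynomial.derivative q + γ • q := by
  simp [Lop]

lemma Lop_coeff (γ : ℝ) (q : Polynomial ℝ) (k : ℕ) :
    (Lop γ q).coeff k = ((k:ℝ) + γ) * q.coeff k := by
  rw [Lop_apply]
  cases k with
  | zero =>
      simp [Polynomial.mul_coeff_zero]
  | succ k =>
      simp only [Polynomial.coeff_add, Polynomial.coeff_X_mul, Polynomial.coeff_derivative,
        Polynomial.coeff_smul, smul_eq_mul]
      push_cast
      ring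

lemma Lop_inj (γ : ℝ) (hγ : 0 < γ) {q : Polynomial ℝ} (h : Lop γ q = 0) : q = 0 := by
  ext k
  have := congrArg (fun r => Polynomial.coeff r k) h
  simp only [Lop_coeff, Polynomial.coeff_zero] at this ⊢
  have hne : ((k:ℝ) + γ) ≠ 0 := by
    have : (0:ℝ) ≤ (k:ℝ) := Nat.cast_nonneg k
    linarith
  exact (mul_eq_zero.1 this).resolve_left hne

lemma Lop_Jp (α γ : ℝ) (n : ℕ) :
    Lop γ (Jp α γ n) = ((n:ℝ)+γ) • Jp (α+1) (γ-1) n := by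
  rw [Lop_apply]; exact Jp_I4 α γ n

noncomputable def R0 (α β b : ℝ) (p : ℕ) (n : ℕ) : Polynomial ℝ :=
  ∑ k ∈ Finset.range (n+1),
    Polynomial.C (Ccoef α β k n * 2^k / ((k:ℝ)+b+p)) * Polynomial.X ^ k

lemma R0_coeff (α β b : ℝ) (p n k : ℕ) :
    (R0 α β b p n).coeff k = Ccoef α β k n * 2^k / ((k:ℝ)+b+p) := by
  rw [R0, Polynomial.finset_sum_coeff]
  simp only [Polynomial.coeff_C_mul, Polynomial.coeff_X_pow, mul_ite, mul_one, mul_zero]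
  rcases le_or_gt k n with h | h
  · rw [Finset.sum_eq_single k]
    · simp
    · intro j _ hj; simp [Ne.symm hj]
    · intro hk; exact absurd (Finset.mem_range.2 (by omega)) hk
  · rw [Finset.sum_eq_zero, cc_gt _ _ h, zero_mul, zero_div]
    intro j hj
    rw [if_neg]
    intro he; rw [Finset.mem_range] at hj; omega

lemma Lop_R0 (α β b : ℝ) (p n : ℕ) (hbp : 0 < b + p) :
    Lop (b + (p:ℝ)) (R0 α β b p n) = Jp α β n := by
  ext k
  rw [Lop_coeff, R0_coeff, Jp_coeff]
  have hne : ((k:ℝ)+b+p) ≠ 0 := by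
    have : (0:ℝ) ≤ (k:ℝ) := Nat.cast_nonneg k
    linarith
  field_simp
  ring

theorem key_span (α β : ℝ) (hα : -1 < α) (hβ : -1 < β) (p : ℕ) (b : ℝ)
    (hbp : 0 < b + p) (j1 j2 : ℕ) (hβb : β = b + j1) (hp : p = j1 + j2 + 1) (n : ℕ) :
    ∃ c : ℕ → ℝ, Polynomial.X ^ p * R0 α β b p n
      = ∑ m ∈ Finset.Icc (n-p) (n+p), c m • Jp α β m := by
  have hcast : β + (j2:ℝ) + 1 = b + (p:ℝ) := by rw [hβb, hp]; push_cast; ring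
  have hbp1 : (-1:ℝ) < b + p - 1 := by
    have : (0:ℝ) ≤ (j2:ℝ) := Nat.cast_nonneg j2
    nlinarith [hβ, hcast]
  -- step 1: raise β to b+p-1
  have step1 : Jp α β n ∈ Sp α (b + p - 1) (n - j2) n := by
    have h := raise_beta_iter α β hα hβ n j2
    have : β + (j2:ℝ) = b + p - 1 := by linarith [hcast]
    rwa [this] at h
  -- step 2: raise α
  have step2 : Jp α β n ∈ Sp (α+1) (b + p - 1) (n - j2 - 1) n :=
    raise_alpha_Sp α (b + p - 1) hα hbp1 step1
  obtain ⟨f, hf⟩ := Sp_repr step2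
  set I := Finset.Icc (n - j2 - 1) n with hI
  set Rr : Polynomial ℝ := ∑ m ∈ I, (f m / ((m:ℝ) + b + p)) • Jp α (b + p) m with hRr
  have hLRr : Lop (b + (p:ℝ)) Rr = Jp α β n := by
    rw [hRr, map_sum, hf]
    refine Finset.sum_congr rfl fun m _ => ?_
    rw [_root_.map_smul, Lop_Jp, smul_smul,
      show ((m:ℝ) + (b + (p:ℝ))) = ((m:ℝ) + b + (p:ℝ)) from by ring]
    have h1 : ((m:ℝ) + b + p) ≠ 0 := by
      have : (0:ℝ) ≤ (m:ℝ) := Nat.cast_nonneg m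
      linarith
    congr 1
    exact div_mul_cancel₀ (f m) h1
  have hReq : Rr = R0 α β b p n := by
    have hsub : Lop (b + (p:ℝ)) (Rr - R0 α β b p n) = 0 := by
      rw [map_sub, hLRr, Lop_R0 _ _ _ _ _ hbp, sub_self]
    exact sub_eq_zero.1 (Lop_inj _ hbp hsub)
  have hmem : Rr ∈ Sp α (b + p) (n - j2 - 1) n := by
    rw [hRr]
    exact Submodule.sum_mem _ fun m hm => Submodule.smul_mem _ _
      (mem_Sp _ _ (Finset.mem_Icc.1 hm).1 (Finset.mem_Icc.1 hm).2)
  have hmem2 : Polynomial.X ^ (j2+1) * Rr ∈ Sp α β (n - j2 - 1) (n + (j2+1)) := by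
    apply mulXpow_lower α β hα hβ (j2+1)
    have : β + ((j2+1:ℕ):ℝ) = b + p := by push_cast; linarith [hcast]
    rwa [this]
  have hmem3 : Polynomial.X ^ j1 * (Polynomial.X ^ (j2+1) * Rr)
      ∈ Sp α β (n - j2 - 1 - j1) (n + (j2+1) + j1) :=
    mulXpow_same α β hα hβ j1 _ _ _ hmem2
  have hxp : Polynomial.X ^ p * Rr = Polynomial.X ^ j1 * (Polynomial.X ^ (j2+1) * Rr) := by
    rw [hp]; ring
  have hmem4 : Polynomial.X ^ p * Rr ∈ Sp α β (n - p) (n + p) := by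
    rw [hxp]
    exact Sp_mono _ _ (by omega) (by omega) hmem3
  rw [hReq] at hmem4
  exact Sp_repr hmem4

lemma term_eq (b : ℝ) (p : ℕ) (hp : 0 < p) (k : ℕ) (hkb : 0 < (k:ℝ) + b + p)
    (w : ℝ) (hw : 0 < w) (Cc : ℝ) :
    (Cc * (2:ℝ)^((k:ℝ)+b) / (2:ℝ)^(((k:ℝ)+b)/(p:ℝ))) * ((2*w)^(((k:ℝ)+b)/(p:ℝ) + 1))
        / (((k:ℝ)+b)/(p:ℝ) + 1)
      = 2*(p:ℝ) * ((2:ℝ)^b * (w^(1/(p:ℝ)))^b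
          * ((w^(1/(p:ℝ)))^(p+k) * (Cc * 2^k / ((k:ℝ)+b+(p:ℝ))))) := by
  have hp0 : ((p:ℝ)) ≠ 0 := by positivity
  have hu : 0 < w^(1/(p:ℝ)) := Real.rpow_pos_of_pos hw _
  set s : ℝ := ((k:ℝ)+b)/(p:ℝ) with hsdef
  have hθ : s + 1 = ((k:ℝ)+b+(p:ℝ))/(p:ℝ) := by
    rw [hsdef]; field_simp
  -- (2*w)^(s+1) = 2^(s+1) * w^(s+1)
  have h1 : (2*w)^(s+1) = (2:ℝ)^(s+1) * w^(s+1) :=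
    Real.mul_rpow (by norm_num) hw.le
  -- 2^(s+1) = 2^s * 2
  have h2 : (2:ℝ)^(s+1) = (2:ℝ)^s * 2 := by
    rw [Real.rpow_add (by norm_num : (0:ℝ) < 2), Real.rpow_one]
  -- w^(s+1) = u^b * u^(p+k)
  have h3 : w^(s+1) = (w^(1/(p:ℝ)))^b * (w^(1/(p:ℝ)))^(p+k) := by
    rw [← Real.rpow_natCast (w^(1/(p:ℝ))) (p+k), ← Real.rpow_add hu,
        ← Real.rpow_mul hw.le]
    congr 1
    rw [hθ]
    push_cast
    field_simp
    ring
  -- 2^(k+b) = 2^k * 2^b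
  have h4 : (2:ℝ)^((k:ℝ)+b) = (2:ℝ)^(k:ℕ) * (2:ℝ)^b := by
    rw [← Real.rpow_natCast (2:ℝ) k, ← Real.rpow_add (by norm_num : (0:ℝ) < 2)]
  have h2s : (0:ℝ) < (2:ℝ)^s := Real.rpow_pos_of_pos (by norm_num) _
  have hθ0 : s + 1 ≠ 0 := by
    rw [hθ]; positivity
  rw [h1, h2, h3, h4, hθ]
  field_simp

lemma jfpQ_expand (α β b : ℝ) (p : ℕ) (hp : 0 < p) (n : ℕ) (t : ℝ) (ht : -1 < t) :
    jfpQ α β b (p:ℝ) n t = ∑ k ∈ Finset.range (n+1),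
      (Ccoef α β k n * (2:ℝ)^((k:ℝ)+b) / (2:ℝ)^(((k:ℝ)+b)/(p:ℝ)))
        * (t+1) ^ (((k:ℝ)+b)/(p:ℝ)) := by
  have hw : 0 < (1+t)/2 := by linarith
  have hv : 0 < ((1+t)/2)^(1/(p:ℝ)) := Real.rpow_pos_of_pos hw _
  set v : ℝ := ((1+t)/2)^(1/(p:ℝ)) with hvdef
  rw [jfpQ, jacobiP, Finset.mul_sum]
  refine Finset.sum_congr rfl fun k _ => ?_
  have e1 : (1 + (2*v - 1)) = 2*v := by ring
  rw [e1]
  have h2v : 0 < 2*v := by linarith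
  -- (2v)^b * (Cc * (2v)^k) = Cc * (2v)^(b+k)
  rw [← Real.rpow_natCast (2*v) k, ← mul_assoc, mul_comm ((2*v)^b : ℝ) (Ccoef α β k n),
      mul_assoc, ← Real.rpow_add h2v]
  -- (2v)^(b+k) = 2^(b+k) * v^(b+k)
  rw [Real.mul_rpow (by norm_num : (0:ℝ) ≤ 2) (le_of_lt hv)]
  -- v^(b+k) = ((1+t)/2)^((b+k)/p)
  have h3 : v^(b+(k:ℝ)) = ((1+t)/2)^((b+(k:ℝ))/(p:ℝ)) := by
    rw [hvdef, ← Real.rpow_mul (le_of_lt hw)]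
    congr 1
    have hp0 : ((p:ℝ)) ≠ 0 := by positivity
    field_simp
  rw [h3]
  -- ((1+t)/2)^θ = (1+t)^θ / 2^θ
  rw [Real.div_rpow (by linarith : (0:ℝ) ≤ 1+t) (by norm_num : (0:ℝ) ≤ 2)]
  rw [show b+(k:ℝ) = (k:ℝ)+b from by ring, show (1:ℝ)+t = t+1 from by ring]
  field_simp

lemma integral_jfpQ (α β b : ℝ) (p : ℕ) (hp : 0 < p) (hb : -(p:ℝ) < b) (n : ℕ)
    (x : ℝ) (hx1 : -1 < x) :
    ∫ t in (-1:ℝ)..x, jfpQ α β b (p:ℝ) n t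
      = 2*(p:ℝ) * ((2:ℝ)^b * ((((1+x)/2) ^ (1/(p:ℝ)))^b)
          * (Polynomial.X^p * R0 α β b p n).eval (((1+x)/2) ^ (1/(p:ℝ)))) := by
  have hps : (0:ℝ) < (p:ℝ) := by positivity
  have hsk : ∀ k : ℕ, (-1:ℝ) < ((k:ℝ)+b)/(p:ℝ) := by
    intro k
    rw [lt_div_iff₀ hps]
    have : (0:ℝ) ≤ (k:ℝ) := Nat.cast_nonneg k
    nlinarith
  set A : ℕ → ℝ := fun k => Ccoef α β k n * (2:ℝ)^((k:ℝ)+b) / (2:ℝ)^(((k:ℝ)+b)/(p:ℝ))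
    with hA
  -- replace integrand a.e.
  have hcong : ∫ t in (-1:ℝ)..x, jfpQ α β b (p:ℝ) n t
      = ∫ t in (-1:ℝ)..x, (∑ k ∈ Finset.range (n+1),
          A k * (t+1) ^ (((k:ℝ)+b)/(p:ℝ))) := by
    apply intervalIntegral.integral_congr_ae
    filter_upwards with t ht
    rw [Set.uIoc_of_le (le_of_lt hx1)] at ht
    exact jfpQ_expand α β b p hp n t ht.1
  have hint : ∀ k ∈ Finset.range (n+1), IntervalIntegrable
      (fun t => A k * (t+1) ^ (((k:ℝ)+b)/(p:ℝ))) MeasureTheory.volume (-1:ℝ) x := by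
    intro k _
    have h1 : IntervalIntegrable (fun y : ℝ => y ^ (((k:ℝ)+b)/(p:ℝ)))
        MeasureTheory.volume (0:ℝ) (x+1) :=
      intervalIntegral.intervalIntegrable_rpow' (hsk k)
    have h2 := (h1.comp_add_right 1)
    have h3 : (0:ℝ) - 1 = -1 := by norm_num
    have h4 : (x+1) - 1 = x := by ring
    rw [h3, h4] at h2
    exact h2.const_mul _
  rw [hcong, intervalIntegral.integral_finset_sum hint]
  -- compute each integral
  have hterm : ∀ k ∈ Finset.range (n+1),
      (∫ t in (-1:ℝ)..x, A k * (t+1) ^ (((k:ℝ)+b)/(p:ℝ)))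
        = A k * (x+1) ^ (((k:ℝ)+b)/(p:ℝ) + 1) / (((k:ℝ)+b)/(p:ℝ) + 1) := by
    intro k _
    rw [intervalIntegral.integral_const_mul]
    have hcomp : (∫ t in (-1:ℝ)..x, (t+1) ^ (((k:ℝ)+b)/(p:ℝ)))
        = ∫ y in (0:ℝ)..(x+1), y ^ (((k:ℝ)+b)/(p:ℝ)) := by
      have := intervalIntegral.integral_comp_add_right
        (a := (-1:ℝ)) (b := x) (fun y : ℝ => y ^ (((k:ℝ)+b)/(p:ℝ))) 1
      rw [this]
      norm_num
    rw [hcomp, integral_rpow (Or.inl (hsk k))]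
    have h0 : ((k:ℝ)+b)/(p:ℝ) + 1 ≠ 0 := by
      have := hsk k; linarith
    rw [Real.zero_rpow h0]
    ring
  rw [Finset.sum_congr rfl hterm]
  -- evaluate RHS polynomial
  have hw : 0 < (1+x)/2 := by linarith
  have heval : (Polynomial.X^p * R0 α β b p n).eval (((1+x)/2) ^ (1/(p:ℝ)))
      = (((1+x)/2) ^ (1/(p:ℝ)))^p * ∑ k ∈ Finset.range (n+1),
          (Ccoef α β k n * 2^k / ((k:ℝ)+b+(p:ℝ))) * (((1+x)/2) ^ (1/(p:ℝ)))^k := by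
    rw [Polynomial.eval_mul, Polynomial.eval_pow, Polynomial.eval_X, R0,
      Polynomial.eval_finset_sum]
    congr 1
    refine Finset.sum_congr rfl fun k _ => ?_
    simp
  rw [heval, Finset.mul_sum, Finset.mul_sum, Finset.mul_sum]
  refine Finset.sum_congr rfl fun k _ => ?_
  have hkb : 0 < (k:ℝ) + b + (p:ℝ) := by
    have : (0:ℝ) ≤ (k:ℝ) := Nat.cast_nonneg k
    linarith
  have := term_eq b p hp k hkb ((1+x)/2) hw (Ccoef α β k n)
  rw [show x+1 = 2*((1+x)/2) from by ring]
  rw [hA]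
  calc (Ccoef α β k n * (2:ℝ)^((k:ℝ)+b) / (2:ℝ)^(((k:ℝ)+b)/(p:ℝ)))
        * (2*((1+x)/2)) ^ (((k:ℝ)+b)/(p:ℝ) + 1) / (((k:ℝ)+b)/(p:ℝ) + 1)
      = 2*(p:ℝ) * ((2:ℝ)^b * ((((1+x)/2)^(1/(p:ℝ)))^b)
          * ((((1+x)/2)^(1/(p:ℝ)))^(p+k) * (Ccoef α β k n * 2^k / ((k:ℝ)+b+(p:ℝ))))) := this
    _ = 2*(p:ℝ) * ((2:ℝ)^b * ((((1+x)/2)^(1/(p:ℝ)))^b)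
          * ((((1+x)/2)^(1/(p:ℝ)))^p * ((Ccoef α β k n * 2^k / ((k:ℝ)+b+(p:ℝ)))
            * (((1+x)/2)^(1/(p:ℝ)))^k))) := by
        rw [pow_add]; ring

lemma jfpQ_eval (α β b : ℝ) (p : ℕ) (m : ℕ) (x : ℝ) (hx1 : -1 < x) :
    jfpQ α β b (p:ℝ) m x
      = (2:ℝ)^b * ((((1+x)/2) ^ (1/(p:ℝ)))^b)
          * (Jp α β m).eval (((1+x)/2) ^ (1/(p:ℝ))) := by
  have hw : 0 < (1+x)/2 := by linarith
  have hv : (0:ℝ) ≤ ((1+x)/2)^(1/(p:ℝ)) := (Real.rpow_pos_of_pos hw _).le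
  rw [jfpQ, ← Jp_eval, Real.mul_rpow (by norm_num : (0:ℝ) ≤ 2) hv]

/-- the integration operator in the JFP basis has bandwidths `(p, p)`. -/
theorem jfp_integration_banded
    (α β : ℝ) (hα : -1 < α) (hβ : -1 < β) (p : ℕ) (hp : 0 < p)
    (b : ℝ) (hb : -(p : ℝ) < b)
    (hβb : ∃ j : ℕ, β - b = (j : ℝ))
    (hbpβ : ∃ j : ℕ, b + p - 1 - β = (j : ℝ)) (n : ℕ) :
    ∃ c : ℕ → ℝ, ∀ x ∈ Set.Ioc (-1 : ℝ) 1,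
      (∫ t in (-1 : ℝ)..x, jfpQ α β b p n t)
        = ∑ m ∈ Finset.Icc (n - p) (n + p), c m * jfpQ α β b p m x := by
  obtain ⟨j1, hj1⟩ := hβb
  obtain ⟨j2, hj2⟩ := hbpβ
  have hps : (0:ℝ) < (p:ℝ) := by positivity
  have hp12 : p = j1 + j2 + 1 := by
    have h : ((j1 + j2 + 1 : ℕ):ℝ) = (p:ℝ) := by push_cast; linarith
    exact_mod_cast h.symm
  have hβeq : β = b + j1 := by linarith
  have hbp : 0 < b + (p:ℝ) := by linarith
  obtain ⟨c0, hc0⟩ := key_span α β hα hβ p b hbp j1 j2 hβeq hp12 n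
  refine ⟨fun m => 2*(p:ℝ)*c0 m, ?_⟩
  rintro x ⟨hx1, hx2⟩
  rw [integral_jfpQ α β b p hp hb n x hx1, hc0]
  rw [Polynomial.eval_finset_sum, Finset.mul_sum, Finset.mul_sum]
  refine Finset.sum_congr rfl fun m _ => ?_
  rw [Polynomial.eval_smul, jfpQ_eval α β b p m x hx1, smul_eq_mul]
  ring
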